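/- Every submodule I of R[x₁,…,x_n]^k over a Euclidean domain R has a finite reduced strong Gröbner basis with respect to any admissible order; moreover it can be obtained by choosing, for each minimal element ((α,i),d) of Deg_δ(I) under the order ⊑, the ≤_P-minimal element g of I with Deg_δ(g) = ((α,i),d). -/

import Mathlib

open MvPolynomial

/-- Polynomial vectors: `R[x₁,…,x_n]^k`. -/
abbrev PolyVec (R : Type*) [CommSemiring R] (n k : ℕ) := Fin k → MvPolynomial (Fin n) R

/-- Monomial vectors `x^α e_i`, encoded as pairs `(α, i)`. -/
abbrev MonV (n k : ℕ) := (Fin n →₀ ℕ) × Fin k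

/-- An admissible order on monomial vectors. -/
structure AdmissibleOrder (n k : ℕ) where
  le : MonV n k → MonV n k → Prop
  refl : ∀ a, le a a
  trans : ∀ a b c, le a b → le b c → le a c
  antisymm : ∀ a b, le a b → le b a → a = b
  total : ∀ a b, le a b ∨ le b a
  dvd_le : ∀ (α β : Fin n →₀ ℕ) (i : Fin k), (∀ m, α m ≤ β m) → le (α, i) (β, i)
  add_le : ∀ (α β γ : Fin n →₀ ℕ) (i j : Fin k),
    le (α, i) (β, j) → le (α + γ, i) (β + γ, j)

variable {R : Type*} [CommRing R] {n k : ℕ}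

/-- `m` is the leading monomial vector of `f` w.r.t. the admissible order `r`
(so in particular `f ≠ 0`). -/
def IsDeg (r : AdmissibleOrder n k) (f : PolyVec R n k) (m : MonV n k) : Prop :=
  (f m.2).coeff m.1 ≠ 0 ∧ ∀ m' : MonV n k, (f m'.2).coeff m'.1 ≠ 0 → r.le m' m

/-- The leading term vector of `g` divides the leading term vector of `f`:
same position, componentwise smaller exponent, and the leading coefficient of `g`
divides that of `f` in `R`. -/
def LtDvd (r : AdmissibleOrder n k) (g f : PolyVec R n k) : Prop :=
  ∃ mg mf : MonV n k, IsDeg r g mg ∧ IsDeg r f mf ∧ mg.2 = mf.2 ∧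
    (∀ m, mg.1 m ≤ mf.1 m) ∧ (g mg.2).coeff mg.1 ∣ (f mf.2).coeff mf.1

/-- `G` is a strong Gröbner basis of the submodule `I` w.r.t. `r`. -/
def IsSGB (r : AdmissibleOrder n k) (G : Set (PolyVec R n k))
    (I : Submodule (MvPolynomial (Fin n) R) (PolyVec R n k)) : Prop :=
  (∀ g ∈ G, g ∈ I ∧ g ≠ 0) ∧
  ∀ f ∈ I, f ≠ 0 → ∃ g ∈ G, LtDvd r g f

/-- Multiplication of a polynomial vector by the term `a·x^m`. -/
noncomputable def termSMul (m : Fin n →₀ ℕ) (a : R) (g : PolyVec R n k) : PolyVec R n k :=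
  fun j => MvPolynomial.monomial m a * g j

/-- `f` has a strong standard representation by `G`: `f = Σ aᵢ mᵢ gᵢ` with `gᵢ ∈ G`,
`Lm(m₁g₁) = Lm(f)` and `Lm(mᵢgᵢ) < Lm(f)` for `i ≥ 2`. -/
def IsSSR (r : AdmissibleOrder n k) (G : Set (PolyVec R n k)) (f : PolyVec R n k) : Prop :=
  ∃ (N : ℕ) (hN : 0 < N) (a : Fin N → R) (m : Fin N → (Fin n →₀ ℕ))
    (g : Fin N → PolyVec R n k),
    (∀ i, g i ∈ G) ∧
    f = ∑ i, termSMul (m i) (a i) (g i) ∧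
    ∃ mf m0 : MonV n k, IsDeg r f mf ∧ IsDeg r (g ⟨0, hN⟩) m0 ∧
      ((m ⟨0, hN⟩ + m0.1, m0.2) : MonV n k) = mf ∧
      ∀ i : Fin N, i ≠ ⟨0, hN⟩ → ∃ mi : MonV n k, IsDeg r (g i) mi ∧
        r.le (m i + mi.1, mi.2) mf ∧ ((m i + mi.1, mi.2) : MonV n k) ≠ mf

/-- `h` is an `S`-polynomial vector of the ordered pair `(f, g)` w.r.t. the
Euclidean grading `δ`. -/
def IsSPolyPair {W : Type*} [LinearOrder W] (δ : R → W) (r : AdmissibleOrder n k)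
    (f g h : PolyVec R n k) : Prop :=
  ∃ mf mg : MonV n k, IsDeg r f mf ∧ IsDeg r g mg ∧
    ((mf.2 ≠ mg.2 ∧ h = 0) ∨
     (mf.2 = mg.2 ∧ δ ((g mg.2).coeff mg.1) ≤ δ ((f mf.2).coeff mf.1) ∧
       ∃ q : R,
         δ ((f mf.2).coeff mf.1 - q * (g mg.2).coeff mg.1) < δ ((f mf.2).coeff mf.1) ∧
         h = termSMul ((mf.1 ⊔ mg.1) - mg.1) 1 f - termSMul ((mf.1 ⊔ mg.1) - mf.1) q g))

/-- `h` is an `S`-polynomial vector of the (unordered) set `{f, g}`. -/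
def IsSPolySet {W : Type*} [LinearOrder W] (δ : R → W) (r : AdmissibleOrder n k)
    (f g h : PolyVec R n k) : Prop :=
  IsSPolyPair δ r f g h ∨ IsSPolyPair δ r g f h

section Reduction

variable {R : Type*} [CommRing R] {n k : ℕ} {W' : Type*} [LinearOrder W']

/-- The term `b·x^α e_i` is reducible by `G`: some `g ∈ G` has `Lm(g) ∣ x^α e_i` and
`δ̂(b − q·Lc(g)) < δ̂(b)` for some `q ∈ R`. -/
def TermRed (dh : R → W') (r : AdmissibleOrder n k) (G : Set (PolyVec R n k))
    (b : R) (α : Fin n →₀ ℕ) (i : Fin k) : Prop :=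
  ∃ g ∈ G, ∃ mg : MonV n k, IsDeg r g mg ∧ mg.2 = i ∧ (∀ m, mg.1 m ≤ α m) ∧
    ∃ q : R, dh (b - q * (g mg.2).coeff mg.1) < dh b

/-- `f` is reducible by `G` if one of its terms is reducible by `G`. -/
def Red (dh : R → W') (r : AdmissibleOrder n k) (G : Set (PolyVec R n k))
    (f : PolyVec R n k) : Prop :=
  ∃ (α : Fin n →₀ ℕ) (i : Fin k), (f i).coeff α ≠ 0 ∧ TermRed dh r G ((f i).coeff α) α i

/-- `p` is normalized: `p ≠ 0` and `δ̂(Lc p) ≤ δ̂(u · Lc p)` for every unit `u`. -/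
def Normalized (dh : R → W') (r : AdmissibleOrder n k) (p : PolyVec R n k) : Prop :=
  p ≠ 0 ∧ ∃ mp : MonV n k, IsDeg r p mp ∧
    ∀ u : R, IsUnit u → dh ((p mp.2).coeff mp.1) ≤ dh (u * (p mp.2).coeff mp.1)

/-- `G` is a reduced strong Gröbner basis of `I`. -/
def IsRedSGB (dh : R → W') (r : AdmissibleOrder n k) (G : Set (PolyVec R n k))
    (I : Submodule (MvPolynomial (Fin n) R) (PolyVec R n k)) : Prop :=
  IsSGB r G I ∧ ∀ g ∈ G, Normalized dh r g ∧ ¬ Red dh r (G \ {g}) g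

end Reduction

section Eleven

variable {R : Type*} [CommRing R] {n k : ℕ}
  {W : Type*} [LinearOrder W] {W' : Type*} [LinearOrder W']

/-- `Deg_δ(f) = d`, i.e. `d = ((α,i), δ(Lc f))` where `x^α e_i = Lm f`. -/
def DegD (δ : R → W) (r : AdmissibleOrder n k) (f : PolyVec R n k)
    (d : MonV n k × W) : Prop :=
  IsDeg r f d.1 ∧ δ ((f d.1.2).coeff d.1.1) = d.2

/-- The order `⊑` on `(ℕ₀ⁿ × {1,…,k}) × W`. -/
def SqLe (d e : MonV n k × W) : Prop :=
  (∀ m, d.1.1 m ≤ e.1.1 m) ∧ d.1.2 = e.1.2 ∧ d.2 ≤ e.2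

/-- The total order `≤_P` on polynomial vectors determined by the admissible order
and the refinement `δ̂`. -/
def LeP (dh : R → W') (r : AdmissibleOrder n k) (p q : PolyVec R n k) : Prop :=
  p = q ∨ ∃ m : MonV n k, IsDeg r (p - q) m ∧
    dh ((p m.2).coeff m.1) < dh ((q m.2).coeff m.1)

end Eleven

section AuxSGB

variable {R : Type*} [CommRing R] {n k : ℕ}

/-- Finset of monomial vectors in the support of a polynomial vector. -/
noncomputable def msupp (f : PolyVec R n k) : Finset (MonV n k) :=
  Finset.univ.biUnion fun i => (f i).support.image fun α => (α, i)

lemma mem_msupp {f : PolyVec R n k} {m : MonV n k} :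
    m ∈ msupp f ↔ (f m.2).coeff m.1 ≠ 0 := by
  obtain ⟨α, i⟩ := m
  simp only [msupp, Finset.mem_biUnion, Finset.mem_univ, true_and, Finset.mem_image,
    MvPolynomial.mem_support_iff, Prod.mk.injEq]
  constructor
  · rintro ⟨j, a, h, rfl, rfl⟩; exact h
  · intro h; exact ⟨i, α, h, rfl, rfl⟩

lemma exists_rel_max {α : Type*} (le : α → α → Prop) (hrefl : ∀ a, le a a)
    (htrans : ∀ a b c, le a b → le b c → le a c) (htot : ∀ a b, le a b ∨ le b a)
    (s : Finset α) : s.Nonempty → ∃ m ∈ s, ∀ x ∈ s, le x m := by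
  classical
  induction s using Finset.induction_on with
  | empty => rintro ⟨x, hx⟩; simp at hx
  | @insert a s ha ih =>
    intro _
    rcases s.eq_empty_or_nonempty with rfl | hs
    · exact ⟨a, by simp, by simp [hrefl]⟩
    · obtain ⟨m, hm, hmax⟩ := ih hs
      rcases htot a m with h | h
      · refine ⟨m, Finset.mem_insert_of_mem hm, ?_⟩
        intro x hx
        rcases Finset.mem_insert.1 hx with rfl | hx
        · exact h
        · exact hmax x hx
      · refine ⟨a, Finset.mem_insert_self a s, ?_⟩
        intro x hx
        rcases Finset.mem_insert.1 hx with rfl | hx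
        · exact hrefl x
        · exact htrans x m a (hmax x hx) h

lemma exists_isDeg (r : AdmissibleOrder n k) {f : PolyVec R n k} (hf : f ≠ 0) :
    ∃ m, IsDeg r f m := by
  have hne : (msupp f).Nonempty := by
    rcases Function.ne_iff.1 hf with ⟨i, hi⟩
    obtain ⟨α, hα⟩ := MvPolynomial.ne_zero_iff.1 (by simpa using hi)
    exact ⟨(α, i), mem_msupp.2 hα⟩
  obtain ⟨m, hm, hmax⟩ := exists_rel_max r.le r.refl r.trans r.total _ hne
  exact ⟨m, mem_msupp.1 hm, fun m' hm' => hmax m' (mem_msupp.2 hm')⟩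

lemma isDeg_unique {r : AdmissibleOrder n k} {f : PolyVec R n k} {m m' : MonV n k}
    (h : IsDeg r f m) (h' : IsDeg r f m') : m = m' :=
  r.antisymm m m' (h'.2 m h.1) (h.2 m' h'.1)

lemma IsDeg.ne_zero' {r : AdmissibleOrder n k} {f : PolyVec R n k} {m : MonV n k}
    (h : IsDeg r f m) : f ≠ 0 := by
  intro h0
  apply h.1
  rw [h0]
  simp

lemma coeff_sub' (p q : PolyVec R n k) (m : MonV n k) :
    ((p - q) m.2).coeff m.1 = (p m.2).coeff m.1 - (q m.2).coeff m.1 := by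
  simp [MvPolynomial.coeff_sub]

lemma termSMul_coeff (τ : Fin n →₀ ℕ) (a : R) (g : PolyVec R n k) (m : MonV n k) :
    ((termSMul τ a g) m.2).coeff m.1
      = if τ ≤ m.1 then a * (g m.2).coeff (m.1 - τ) else 0 :=
  MvPolynomial.coeff_monomial_mul' _ _ _ _

lemma termSMul_coeff_add (τ γ : Fin n →₀ ℕ) (a : R) (g : PolyVec R n k) (i : Fin k) :
    ((termSMul τ a g) i).coeff (τ + γ) = a * (g i).coeff γ :=
  MvPolynomial.coeff_monomial_mul _ _ _ _

lemma termSMul_bound (r : AdmissibleOrder n k) {g : PolyVec R n k} {mg : MonV n k}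
    (hg : IsDeg r g mg) (τ : Fin n →₀ ℕ) (a : R) {m' : MonV n k}
    (hm : ((termSMul τ a g) m'.2).coeff m'.1 ≠ 0) : r.le m' (τ + mg.1, mg.2) := by
  rw [termSMul_coeff] at hm
  split_ifs at hm with hle
  · have h2 : (g m'.2).coeff (m'.1 - τ) ≠ 0 := fun h => hm (by rw [h, mul_zero])
    have h3 := r.add_le _ _ τ _ _ (hg.2 (m'.1 - τ, m'.2) h2)
    rwa [tsub_add_cancel_of_le hle, add_comm mg.1 τ] at h3
  · exact absurd rfl hm

lemma termSMul_isDeg (r : AdmissibleOrder n k) {g : PolyVec R n k} {mg : MonV n k}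
    (hg : IsDeg r g mg) (τ : Fin n →₀ ℕ) {a : R}
    (ha : a * (g mg.2).coeff mg.1 ≠ 0) :
    IsDeg r (termSMul τ a g) (τ + mg.1, mg.2) := by
  constructor
  · show ((termSMul τ a g) mg.2).coeff (τ + mg.1) ≠ 0
    rw [termSMul_coeff_add]
    exact ha
  · intro m' hm'
    exact termSMul_bound r hg τ a hm'

lemma termSMul_mem {I : Submodule (MvPolynomial (Fin n) R) (PolyVec R n k)}
    {g : PolyVec R n k} (hg : g ∈ I) (τ : Fin n →₀ ℕ) (a : R) :
    termSMul τ a g ∈ I := by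
  have h : termSMul τ a g = (MvPolynomial.monomial τ a) • g := by
    funext j
    simp [termSMul, Pi.smul_apply, smul_eq_mul]
  rw [h]
  exact I.smul_mem _ hg

/-- strict admissible order -/
def mlt (r : AdmissibleOrder n k) (a b : MonV n k) : Prop := r.le a b ∧ a ≠ b

lemma monv_pwo (f : ℕ → MonV n k) :
    ∃ a b : ℕ, a < b ∧ (∀ m, (f a).1 m ≤ (f b).1 m) ∧ (f a).2 = (f b).2 := by
  have hpwo : (Set.univ : Set ((Fin n →₀ ℕ) × Fin k)).IsPWO := by
    rw [← Set.univ_prod_univ]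
    exact (Set.isPWO_univ_iff.2 inferInstance).prod Set.finite_univ.isPWO
  obtain ⟨g, hg⟩ := hpwo.exists_monotone_subseq (f := f) fun _ => Set.mem_univ _
  obtain ⟨a, b, hab, h2⟩ := Finite.exists_ne_map_eq_of_infinite fun t : ℕ => (f (g t)).2
  rcases hab.lt_or_gt with h | h
  · exact ⟨g a, g b, g.strictMono h, fun m => Finsupp.le_def.1 (hg h.le).1 m, h2⟩
  · exact ⟨g b, g a, g.strictMono h, fun m => Finsupp.le_def.1 (hg h.le).1 m, h2.symm⟩

lemma mlt_wf (r : AdmissibleOrder n k) : WellFounded (mlt r) := by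
  haveI : IsIrrefl (MonV n k) (mlt r) := ⟨fun _ h => h.2 rfl⟩
  haveI : IsTrans (MonV n k) (mlt r) :=
    ⟨fun a b c h1 h2 => ⟨r.trans _ _ _ h1.1 h2.1,
      fun he => h2.2 (r.antisymm _ _ h2.1 (he ▸ h1.1))⟩⟩
  haveI : IsStrictOrder (MonV n k) (mlt r) := { }
  rw [RelEmbedding.wellFounded_iff_isEmpty]
  constructor
  intro e
  obtain ⟨a, b, hab, h1, h2⟩ := monv_pwo fun t => e t
  have hlt : mlt r (e b) (e a) := e.map_rel_iff.2 hab
  have hle : r.le (e a) (e b) := by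
    have h := r.dvd_le (e a).1 (e b).1 (e b).2 h1
    rwa [show ((e a).1, (e b).2) = e a from by rw [← h2]] at h
  exact hlt.2 (r.antisymm _ _ hlt.1 hle)

section WPrime

variable {W' : Type*} [LinearOrder W'] [WellFoundedLT W']

/-- strict version of `LeP` -/
def ltP (dh : R → W') (r : AdmissibleOrder n k) (p q : PolyVec R n k) : Prop :=
  ∃ m : MonV n k, IsDeg r (p - q) m ∧ dh ((p m.2).coeff m.1) < dh ((q m.2).coeff m.1)

noncomputable def toFinsuppM (f : PolyVec R n k) : MonV n k →₀ R :=
  Finsupp.onFinset (msupp f) (fun m => (f m.2).coeff m.1) fun _ h => mem_msupp.2 h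

lemma ltP_wf (dh : R → W') (dh0 : ∀ a : R, dh 0 ≤ dh a) (r : AdmissibleOrder n k) :
    WellFounded (ltP dh r) := by
  haveI htri : IsTrichotomous (MonV n k) (Function.swap (mlt r)) := by
    constructor
    intro a b h1 h2
    rcases eq_or_ne a b with rfl | hne
    · exact rfl
    rcases r.total a b with h | h
    · exact (h2 ⟨h, hne⟩).elim
    · exact (h1 ⟨h, hne.symm⟩).elim
  have hlex : WellFounded (Finsupp.Lex (Function.swap (mlt r)) (fun a b : R => dh a < dh b)) := by
    refine Finsupp.Lex.wellFounded' ?_ ?_ ?_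
    · intro a h
      exact absurd h (not_lt.2 (dh0 a))
    · exact InvImage.wf dh wellFounded_lt
    · exact mlt_wf r
  refine Subrelation.wf ?_ (InvImage.wf toFinsuppM hlex)
  rintro p q ⟨m, hdeg, hlt⟩
  refine ⟨m, ?_, hlt⟩
  intro j hj
  by_contra hne
  have hsub : ((p - q) j.2).coeff j.1 ≠ 0 := by
    rw [coeff_sub']
    exact sub_ne_zero.2 hne
  exact hj.2 (r.antisymm _ _ hj.1 (hdeg.2 j hsub))

lemma ltP_total (dh : R → W') (hinj : Function.Injective dh) (r : AdmissibleOrder n k)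
    {p q : PolyVec R n k} (hne : p ≠ q) : ltP dh r p q ∨ ltP dh r q p := by
  obtain ⟨m, hm⟩ := exists_isDeg r (f := p - q) (sub_ne_zero.2 hne)
  have key : ∀ j : MonV n k, ((q - p) j.2).coeff j.1 = -((p - q) j.2).coeff j.1 := by
    intro j
    rw [coeff_sub', coeff_sub']
    ring
  have hm' : IsDeg r (q - p) m := by
    constructor
    · rw [key, neg_ne_zero]
      exact hm.1
    · intro m' h
      rw [key, neg_ne_zero] at h
      exact hm.2 m' h
  have hab : (p m.2).coeff m.1 ≠ (q m.2).coeff m.1 := by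
    apply sub_ne_zero.1
    rw [← coeff_sub']
    exact hm.1
  rcases lt_or_gt_of_ne (fun h => hab (hinj h)) with h | h
  · exact Or.inl ⟨m, hm, h⟩
  · exact Or.inr ⟨m, hm', h⟩

end WPrime

section WSq

variable {W : Type*} [LinearOrder W] [WellFoundedLT W]

lemma sqLe_refl (d : MonV n k × W) : SqLe d d := ⟨fun _ => le_rfl, rfl, le_rfl⟩

lemma sqLe_trans {d e f' : MonV n k × W} (h1 : SqLe d e) (h2 : SqLe e f') : SqLe d f' :=
  ⟨fun m => (h1.1 m).trans (h2.1 m), h1.2.1.trans h2.2.1, h1.2.2.trans h2.2.2⟩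

lemma sqLt_wf : WellFounded (fun d e : MonV n k × W => SqLe d e ∧ d ≠ e) := by
  have hwf : WellFounded (Prod.Lex ((· < ·) : (Fin n →₀ ℕ) → (Fin n →₀ ℕ) → Prop)
      ((· < ·) : W → W → Prop)) :=
    WellFounded.prod_lex wellFounded_lt wellFounded_lt
  refine Subrelation.wf ?_ (InvImage.wf (fun d : MonV n k × W => (d.1.1, d.2)) hwf)
  rintro d e ⟨hle, hne⟩
  show Prod.Lex _ _ (d.1.1, d.2) (e.1.1, e.2)
  rcases eq_or_ne d.1.1 e.1.1 with h1 | h1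
  · have h2 : d.2 ≠ e.2 := by
      intro h2
      exact hne (Prod.ext (Prod.ext h1 hle.2.1) h2)
    rw [h1]
    exact Prod.Lex.right _ (lt_of_le_of_ne hle.2.2 h2)
  · exact Prod.Lex.left _ _ (lt_of_le_of_ne (Finsupp.le_def.2 hle.1) h1)

lemma exists_min_below {S : Set (MonV n k × W)} {e : MonV n k × W} (he : e ∈ S) :
    ∃ d ∈ S, SqLe d e ∧ ∀ e' ∈ S, SqLe e' d → e' = d := by
  obtain ⟨d, hd, hmin⟩ := sqLt_wf.has_min {d | d ∈ S ∧ SqLe d e} ⟨e, he, sqLe_refl e⟩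
  refine ⟨d, hd.1, hd.2, fun e' he' hle => ?_⟩
  by_contra hne
  exact hmin e' ⟨he', sqLe_trans hle hd.2⟩ ⟨hle, hne⟩

lemma antichain_finite (M : Set (MonV n k × W))
    (hM : ∀ d ∈ M, ∀ e ∈ M, SqLe e d → e = d) : M.Finite := by
  have hU : M = ⋃ i : Fin k, {d ∈ M | d.1.2 = i} := by
    ext d
    simp only [Set.mem_iUnion, Set.mem_setOf_eq]
    exact ⟨fun h => ⟨d.1.2, h, rfl⟩, fun ⟨i, h, _⟩ => h⟩
  rw [hU]
  refine Set.finite_iUnion fun i => ?_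
  have hpwo : ((fun d : MonV n k × W => (d.1.1, d.2)) '' {d ∈ M | d.1.2 = i}).IsPWO := by
    have huniv : (Set.univ : Set ((Fin n →₀ ℕ) × W)).IsPWO := by
      rw [← Set.univ_prod_univ]
      exact (Set.isPWO_univ_iff.2 inferInstance).prod ((Set.isWF_univ_iff.2 ⟨wellFounded_lt⟩).isPWO)
    exact huniv.mono (Set.subset_univ _)
  have hanti : IsAntichain (· ≤ ·) ((fun d : MonV n k × W => (d.1.1, d.2)) '' {d ∈ M | d.1.2 = i}) := by
    rintro _ ⟨x, hx, rfl⟩ _ ⟨y, hy, rfl⟩ hne hle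
    apply hne
    have hsq : SqLe x y := ⟨Finsupp.le_def.1 hle.1, hx.2.trans hy.2.symm, hle.2⟩
    rw [hM y hy.1 x hx.1 hsq]
  have hinj : Set.InjOn (fun d : MonV n k × W => (d.1.1, d.2)) {d ∈ M | d.1.2 = i} := by
    intro x hx y hy hxy
    simp only [Prod.mk.injEq] at hxy
    exact Prod.ext (Prod.ext hxy.1 (hx.2.trans hy.2.symm)) hxy.2
  exact Set.Finite.of_finite_image (hanti.finite_of_partiallyWellOrderedOn hpwo) hinj

end WSq

end AuxSGB
/-- **existence of the reduced strong Gröbner basis.** Every submodule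
`I` of `R[x₁,…,x_n]^k` over a Euclidean domain has a finite reduced strong Gröbner
basis; it is obtained by choosing, for each `⊑`-minimal element `d` of `Deg_δ(I)`,
the `≤_P`-minimal element of `I` with `Deg_δ`-value `d`. -/
theorem exists_finite_reduced_sgb
    {R : Type*} [CommRing R] [IsDomain R] {n k : ℕ}
    {W : Type*} [LinearOrder W] [WellFoundedLT W]
    {W' : Type*} [LinearOrder W'] [WellFoundedLT W']
    (δ : R → W)
    (hzero : ∀ a : R, δ 0 ≤ δ a)
    (hmul : ∀ a b : R, a ≠ 0 → δ b ≤ δ (a * b))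
    (hdiv : ∀ a b : R, a ≠ 0 → ∃ q s : R, b = q * a + s ∧ δ s < δ a)
    (dh : R → W') (hinj : Function.Injective dh)
    (dh0 : ∀ a : R, dh 0 ≤ dh a)
    (hmono : ∀ a b : R, δ a < δ b → dh a < dh b)
    (r : AdmissibleOrder n k)
    (I : Submodule (MvPolynomial (Fin n) R) (PolyVec R n k)) :
    ∃ G : Finset (PolyVec R n k),
      IsRedSGB dh r (↑G) I ∧
      -- every element of `G` realizes a `⊑`-minimal element of `Deg_δ(I)` and is
      -- `≤_P`-minimal among elements of `I` with that `Deg_δ`-value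
      (∀ g ∈ G, ∃ d : MonV n k × W, DegD δ r g d ∧
        (∀ e : MonV n k × W, (∃ f ∈ I, DegD δ r f e) → SqLe e d → e = d) ∧
        (∀ g' ∈ I, DegD δ r g' d → LeP dh r g g')) ∧
      -- every `⊑`-minimal element of `Deg_δ(I)` is realized by some element of `G`
      (∀ d : MonV n k × W, (∃ f ∈ I, DegD δ r f d) →
        (∀ e : MonV n k × W, (∃ f ∈ I, DegD δ r f e) → SqLe e d → e = d) →
        ∃ g ∈ G, DegD δ r g d) := by
  classical
  set DS : Set (MonV n k × W) := {e | ∃ f ∈ I, DegD δ r f e} with hDSdef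
  set M : Set (MonV n k × W) := {d | d ∈ DS ∧ ∀ e ∈ DS, SqLe e d → e = d} with hMdef
  have degd_unique : ∀ (f : PolyVec R n k) (d e : MonV n k × W),
      DegD δ r f d → DegD δ r f e → d = e := by
    rintro f d e ⟨hd1, hd2⟩ ⟨he1, he2⟩
    have h1 : d.1 = e.1 := isDeg_unique hd1 he1
    refine Prod.ext h1 ?_
    rw [← hd2, ← he2, h1]
  have degd_ne : ∀ (g : PolyVec R n k) (d : MonV n k × W), DegD δ r g d → g ≠ 0 :=
    fun _ _ hd => hd.1.ne_zero'
  -- choice of ≤ₚ-minimal elements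
  have key : ∀ d : MonV n k × W, d ∈ DS →
      ∃ g, (g ∈ I ∧ DegD δ r g d) ∧ ∀ g' ∈ I, DegD δ r g' d → LeP dh r g g' := by
    intro d hd
    obtain ⟨f0, hf0, hf0d⟩ := hd
    obtain ⟨g, hgS, hgmin⟩ := (ltP_wf dh dh0 r).has_min {g | g ∈ I ∧ DegD δ r g d}
      ⟨f0, hf0, hf0d⟩
    refine ⟨g, hgS, fun g' hg' hgd' => ?_⟩
    rcases eq_or_ne g g' with rfl | hne
    · exact Or.inl rfl
    rcases ltP_total dh hinj r hne with h | h
    · exact Or.inr h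
    · exact absurd h (hgmin g' ⟨hg', hgd'⟩)
  let F : MonV n k × W → PolyVec R n k := fun d => if h : d ∈ DS then (key d h).choose else 0
  have hFmem : ∀ d (h : d ∈ DS), F d ∈ I ∧ DegD δ r (F d) d := by
    intro d h
    simp only [F, dif_pos h]
    exact (key d h).choose_spec.1
  have hFmin : ∀ d (h : d ∈ DS), ∀ g' ∈ I, DegD δ r g' d → LeP dh r (F d) g' := by
    intro d h
    simp only [F, dif_pos h]
    exact (key d h).choose_spec.2
  have hMfin : M.Finite := antichain_finite M fun d hd e he hle => hd.2 e he.1 hle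
  let G : Finset (PolyVec R n k) := hMfin.toFinset.image F
  have hGmem : ∀ g, g ∈ G ↔ ∃ d ∈ M, F d = g := by
    intro g
    simp [G, Set.Finite.mem_toFinset]
  have hGspec : ∀ g ∈ G, ∃ d, d ∈ M ∧ F d = g ∧ g ∈ I ∧ DegD δ r g d := by
    intro g hg
    obtain ⟨d, hdM, hFd⟩ := (hGmem g).1 hg
    obtain ⟨h1, h2⟩ := hFmem d hdM.1
    exact ⟨d, hdM, hFd, hFd ▸ h1, hFd ▸ h2⟩
  -- strong Gröbner basis property
  have hSGB2 : ∀ f ∈ I, f ≠ 0 → ∃ g ∈ (↑G : Set (PolyVec R n k)), LtDvd r g f := by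
    intro f hfI hf
    obtain ⟨mf, hmf⟩ := exists_isDeg r hf
    set V : Set W := {v | ∃ h, h ∈ I ∧ IsDeg r h mf ∧ δ ((h mf.2).coeff mf.1) = v} with hVdef
    have hVne : δ ((f mf.2).coeff mf.1) ∈ V := ⟨f, hfI, hmf, rfl⟩
    obtain ⟨v0, hv0V, hv0min⟩ := (wellFounded_lt (α := W)).has_min V ⟨_, hVne⟩
    obtain ⟨h0, h0I, h0deg, h0δ⟩ := hv0V
    have he0 : ((mf, v0) : MonV n k × W) ∈ DS := ⟨h0, h0I, h0deg, h0δ⟩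
    obtain ⟨d', hd'DS, hd'le, hd'min⟩ := exists_min_below he0
    have hd'M : d' ∈ M := ⟨hd'DS, hd'min⟩
    set g' := F d' with hg'def
    have hg'I : g' ∈ I := (hFmem d' hd'DS).1
    have hg'deg : DegD δ r g' d' := (hFmem d' hd'DS).2
    have hg'G : g' ∈ G := (hGmem g').2 ⟨d', hd'M, rfl⟩
    have hidx : d'.1.2 = mf.2 := hd'le.2.1
    have hexp : ∀ m, d'.1.1 m ≤ mf.1 m := hd'le.1
    have hexp' : d'.1.1 ≤ mf.1 := Finsupp.le_def.2 hexp
    have hLc : (g' d'.1.2).coeff d'.1.1 ≠ 0 := hg'deg.1.1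
    -- the shift of g' has leading monomial mf, so δ(Lc g') ∈ V
    have hshift : IsDeg r (termSMul (mf.1 - d'.1.1) 1 g') mf := by
      have h := termSMul_isDeg r hg'deg.1 (mf.1 - d'.1.1) (a := (1 : R))
        (by rw [one_mul]; exact hLc)
      rwa [tsub_add_cancel_of_le hexp', hidx] at h
    have hcs : ((termSMul (mf.1 - d'.1.1) 1 g') mf.2).coeff mf.1
        = (g' d'.1.2).coeff d'.1.1 := by
      have h := termSMul_coeff_add (mf.1 - d'.1.1) d'.1.1 1 g' mf.2
      rw [tsub_add_cancel_of_le hexp', one_mul] at h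
      rw [hidx]
      exact h
    have hVg' : δ ((g' d'.1.2).coeff d'.1.1) ∈ V :=
      ⟨_, termSMul_mem hg'I _ _, hshift, hcs ▸ rfl⟩
    have hδg'v0 : δ ((g' d'.1.2).coeff d'.1.1) ≤ v0 := by
      rw [hg'deg.2]
      exact hd'le.2.2
    obtain ⟨q, s, hqs, hs⟩ := hdiv ((g' d'.1.2).coeff d'.1.1) ((f mf.2).coeff mf.1) hLc
    by_cases hs0 : s = 0
    · refine ⟨g', hg'G, d'.1, mf, hg'deg.1, hmf, hidx, hexp, ?_⟩
      exact Dvd.intro q (by rw [hqs, hs0, add_zero, mul_comm])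
    · exfalso
      set T := termSMul (mf.1 - d'.1.1) q g' with hTdef
      have hTI : T ∈ I := termSMul_mem hg'I _ _
      have hTc : (T mf.2).coeff mf.1 = q * (g' d'.1.2).coeff d'.1.1 := by
        have h := termSMul_coeff_add (mf.1 - d'.1.1) d'.1.1 q g' mf.2
        rw [tsub_add_cancel_of_le hexp'] at h
        rw [hidx]
        exact h
      have hc2 : ((f - T) mf.2).coeff mf.1 = s := by
        rw [coeff_sub' f T mf, hTc, hqs]
        ring
      have hdeg2 : IsDeg r (f - T) mf := by
        constructor
        · rw [hc2]; exact hs0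
        · intro m' hm'
          have hor : (f m'.2).coeff m'.1 ≠ 0 ∨ (T m'.2).coeff m'.1 ≠ 0 := by
            by_contra hcon
            push_neg at hcon
            rw [coeff_sub' f T m', hcon.1, hcon.2, sub_zero] at hm'
            exact hm' rfl
          rcases hor with h | h
          · exact hmf.2 m' h
          · have hb := termSMul_bound r hg'deg.1 (mf.1 - d'.1.1) q h
            rwa [tsub_add_cancel_of_le hexp', hidx] at hb
      have hsV : δ s ∈ V := ⟨f - T, I.sub_mem hfI hTI, hdeg2, by rw [hc2]⟩
      exact hv0min _ hsV (lt_of_lt_of_le hs hδg'v0)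
  -- every g in G is LeP-minimal and its degree is unique among G
  have hGuniq : ∀ g ∈ G, ∀ d, d ∈ M → DegD δ r g d → F d = g := by
    intro g hg d hdM hgd
    obtain ⟨d0, hd0M, hFd0, _, hgd0⟩ := hGspec g hg
    rw [degd_unique g d d0 hgd hgd0]
    exact hFd0
  -- normalization
  have hNorm : ∀ g ∈ G, Normalized dh r g := by
    intro g hg
    obtain ⟨d, hdM, hFd, hgI, hgd⟩ := hGspec g hg
    refine ⟨degd_ne g d hgd, d.1, hgd.1, ?_⟩
    intro u hu
    by_contra hcon
    push_neg at hcon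
    have hu0 : u ≠ 0 := hu.ne_zero
    have hb0 : (g d.1.2).coeff d.1.1 ≠ 0 := hgd.1.1
    set g2 : PolyVec R n k := (MvPolynomial.C u : MvPolynomial (Fin n) R) • g with hg2def
    have hg2I : g2 ∈ I := I.smul_mem _ hgI
    have hg2coeff : ∀ m : MonV n k, (g2 m.2).coeff m.1 = u * (g m.2).coeff m.1 := by
      intro m
      rw [hg2def]
      simp [MvPolynomial.coeff_C_mul]
    have hg2deg : DegD δ r g2 d := by
      refine ⟨⟨?_, ?_⟩, ?_⟩
      · rw [hg2coeff]
        exact mul_ne_zero hu0 hb0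
      · intro m' hm'
        rw [hg2coeff] at hm'
        exact hgd.1.2 m' (right_ne_zero_of_mul hm')
      · rw [hg2coeff]
        obtain ⟨U, rfl⟩ := hu
        have h1 : δ ((g d.1.2).coeff d.1.1) ≤ δ ((U : R) * (g d.1.2).coeff d.1.1) :=
          hmul _ _ hu0
        have h2 : δ ((U : R) * (g d.1.2).coeff d.1.1) ≤ δ ((g d.1.2).coeff d.1.1) := by
          have h := hmul ((U⁻¹ : Rˣ) : R) ((U : R) * (g d.1.2).coeff d.1.1) (Units.ne_zero _)
          rwa [← mul_assoc, Units.inv_mul, one_mul] at h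
        rw [le_antisymm h2 h1]
        exact hgd.2
    have hlep := hFmin d hdM.1 g2 hg2I hg2deg
    rw [hFd] at hlep
    rcases hlep with heq | ⟨m, hdegm, hlt⟩
    · have hco := congrArg (fun x : PolyVec R n k => (x d.1.2).coeff d.1.1) heq
      rw [hg2coeff d.1] at hco
      rw [← hco] at hcon
      exact lt_irrefl _ hcon
    · have h1u : (1 : R) - u ≠ 0 := by
        intro h
        have hu1 : u = 1 := by
          have := sub_eq_zero.1 h
          exact this.symm
        rw [hu1, one_mul] at hcon
        exact lt_irrefl _ hcon
      have hsubcoeff : ∀ m' : MonV n k,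
          ((g - g2) m'.2).coeff m'.1 = (1 - u) * (g m'.2).coeff m'.1 := by
        intro m'
        rw [coeff_sub', hg2coeff]
        ring
      have hdeg' : IsDeg r (g - g2) d.1 :=
        ⟨by rw [hsubcoeff]; exact mul_ne_zero h1u hb0,
         fun m' hm' => hgd.1.2 m' (by rw [hsubcoeff] at hm'; exact right_ne_zero_of_mul hm')⟩
      have hmeq : m = d.1 := isDeg_unique hdegm hdeg'
      rw [hmeq, hg2coeff d.1] at hlt
      exact lt_asymm hcon hlt
  -- irreducibility
  have hNoRed : ∀ g ∈ G, ¬ Red dh r ((↑G : Set (PolyVec R n k)) \ {g}) g := by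
    intro g hg hred
    obtain ⟨d, hdM, hFd, hgI, hgd⟩ := hGspec g hg
    obtain ⟨α, j, hb0, g1, hg1mem, mg1, hg1deg, hg1idx, hg1le, q, hq⟩ := hred
    have hg1G : g1 ∈ G := Finset.mem_coe.1 hg1mem.1
    have hg1ne : g1 ≠ g := by
      intro h
      exact hg1mem.2 (by simp [h])
    obtain ⟨d1, hd1M, hFd1, hg1I, hg1degd⟩ := hGspec g1 hg1G
    have hq0 : q ≠ 0 := by
      rintro rfl
      rw [zero_mul, sub_zero] at hq
      exact lt_irrefl _ hq
    have hLc1 : (g1 mg1.2).coeff mg1.1 ≠ 0 := hg1deg.1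
    have hαj : r.le ((α, j) : MonV n k) d.1 := hgd.1.2 (α, j) hb0
    have hg1le' : mg1.1 ≤ α := Finsupp.le_def.2 hg1le
    have hd1eq : d1.1 = mg1 := isDeg_unique hg1degd.1 hg1deg
    by_cases hkey : ((α, j) : MonV n k) = d.1 ∧ (g j).coeff α - q * (g1 mg1.2).coeff mg1.1 = 0
    · -- leading term fully cancelled: g1's degree is ⊑ d, contradicting distinctness
      obtain ⟨hαd, hc0⟩ := hkey
      have hbq : (g j).coeff α = q * (g1 mg1.2).coeff mg1.1 := sub_eq_zero.1 hc0
      have hδle : δ ((g1 mg1.2).coeff mg1.1) ≤ δ ((g j).coeff α) := by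
        rw [hbq]
        exact hmul q _ hq0
      have hSq : SqLe d1 d := by
        refine ⟨?_, ?_, ?_⟩
        · intro m
          rw [hd1eq, ← hαd]
          exact hg1le m
        · rw [hd1eq, ← hαd]
          exact hg1idx
        · rw [← hg1degd.2, ← hgd.2, hd1eq, ← hαd]
          exact hδle
      have hdd : d1 = d := hdM.2 d1 hd1M.1 hSq
      exact hg1ne (by rw [← hFd1, hdd, hFd])
    · -- otherwise reducing yields a smaller element with the same Deg_δ
      set T := termSMul (α - mg1.1) q g1 with hTdef
      have hTI : T ∈ I := termSMul_mem hg1I _ _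
      have hTdeg : IsDeg r T ((α, j) : MonV n k) := by
        have h := termSMul_isDeg r hg1deg (α - mg1.1) (a := q) (mul_ne_zero hq0 hLc1)
        rwa [tsub_add_cancel_of_le hg1le', hg1idx] at h
      have hTcoeff : (T j).coeff α = q * (g1 mg1.2).coeff mg1.1 := by
        have h := termSMul_coeff_add (α - mg1.1) mg1.1 q g1 j
        rw [tsub_add_cancel_of_le hg1le'] at h
        rw [hg1idx]
        exact h
      have hhI : g - T ∈ I := I.sub_mem hgI hTI
      have hhcα : ((g - T) j).coeff α = (g j).coeff α - q * (g1 mg1.2).coeff mg1.1 := by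
        rw [coeff_sub' g T ((α, j) : MonV n k), hTcoeff]
      have hbound : ∀ m' : MonV n k, ((g - T) m'.2).coeff m'.1 ≠ 0 → r.le m' d.1 := by
        intro m' hm'
        have hor : (g m'.2).coeff m'.1 ≠ 0 ∨ (T m'.2).coeff m'.1 ≠ 0 := by
          by_contra hcon
          push_neg at hcon
          rw [coeff_sub' g T m', hcon.1, hcon.2, sub_zero] at hm'
          exact hm' rfl
        rcases hor with h | h
        · exact hgd.1.2 m' h
        · exact r.trans _ _ _ (hTdeg.2 m' h) hαj
      have hDegh : DegD δ r (g - T) d := by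
        by_cases hαd : ((α, j) : MonV n k) = d.1
        · have hc0 : (g j).coeff α - q * (g1 mg1.2).coeff mg1.1 ≠ 0 :=
            fun h => hkey ⟨hαd, h⟩
          have hdegh : IsDeg r (g - T) d.1 := by
            constructor
            · rw [← hαd]
              show ((g - T) j).coeff α ≠ 0
              rw [hhcα]
              exact hc0
            · exact hbound
          have hδcb : δ ((g j).coeff α - q * (g1 mg1.2).coeff mg1.1) ≤ δ ((g j).coeff α) := by
            by_contra hlt'
            push_neg at hlt'
            exact lt_asymm hq (hmono _ _ hlt')
          have heDS : ((d.1, δ ((g j).coeff α - q * (g1 mg1.2).coeff mg1.1)) : MonV n k × W)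
              ∈ DS := by
            refine ⟨g - T, hhI, hdegh, ?_⟩
            rw [← hαd]
            show δ (((g - T) j).coeff α) = _
            rw [hhcα]
          have hSq : SqLe (d.1, δ ((g j).coeff α - q * (g1 mg1.2).coeff mg1.1)) d := by
            refine ⟨fun m => le_rfl, rfl, ?_⟩
            rw [← hgd.2, ← hαd]
            exact hδcb
          have heq := hdM.2 _ heDS hSq
          refine ⟨hdegh, ?_⟩
          have h2 := congrArg Prod.snd heq
          rw [← hαd] at h2 ⊢
          show δ (((g - T) j).coeff α) = d.2
          rw [hhcα]
          exact h2
        · have hTc0 : (T d.1.2).coeff d.1.1 = 0 := by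
            by_contra h
            exact hαd (r.antisymm _ _ hαj (hTdeg.2 d.1 h))
          have hcd : ((g - T) d.1.2).coeff d.1.1 = (g d.1.2).coeff d.1.1 := by
            rw [coeff_sub' g T d.1, hTc0, sub_zero]
          refine ⟨⟨?_, hbound⟩, ?_⟩
          · rw [hcd]
            exact hgd.1.1
          · rw [hcd]
            exact hgd.2
      have hlep := hFmin d hdM.1 (g - T) hhI hDegh
      rw [hFd] at hlep
      have hT0 : (T j).coeff α ≠ 0 := by
        rw [hTcoeff]
        exact mul_ne_zero hq0 hLc1
      rcases hlep with heq | ⟨m, hdegm, hlt⟩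
      · have : T = 0 := by
          have h := sub_eq_self.1 heq.symm
          exact h
        rw [this] at hT0
        simp at hT0
      · rw [sub_sub_cancel] at hdegm
        have hmeq : m = ((α, j) : MonV n k) := isDeg_unique hdegm hTdeg
        rw [hmeq] at hlt
        have hlt' : dh ((g j).coeff α) <
            dh ((g j).coeff α - q * (g1 mg1.2).coeff mg1.1) := by
          have hc := hhcα
          calc dh ((g j).coeff α) < dh (((g - T) j).coeff α) := hlt
          _ = _ := by rw [hc]
        exact lt_asymm hq hlt'
  -- assemble
  refine ⟨G, ⟨⟨?_, hSGB2⟩, ?_⟩, ?_, ?_⟩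
  · intro g hg
    obtain ⟨d, _, _, hgI, hgd⟩ := hGspec g (Finset.mem_coe.1 hg)
    exact ⟨hgI, degd_ne g d hgd⟩
  · intro g hg
    exact ⟨hNorm g (Finset.mem_coe.1 hg), hNoRed g (Finset.mem_coe.1 hg)⟩
  · intro g hg
    obtain ⟨d, hdM, hFd, hgI, hgd⟩ := hGspec g hg
    refine ⟨d, hgd, hdM.2, fun g' hg' hdg' => ?_⟩
    have h := hFmin d hdM.1 g' hg' hdg'
    rwa [hFd] at h
  · intro d hdDS hdmin
    have hdM : d ∈ M := ⟨hdDS, hdmin⟩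
    exact ⟨F d, (hGmem _).2 ⟨d, hdM, rfl⟩, (hFmem d hdDS).2⟩
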